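/- Let Ω ⊆ ℝⁿ be open convex, α > 0, and φ : Ω → ℝ differentiable with e^{αφ} concave. Define ϕ = −e^{αφ} (which is convex), κ(ξ) = −1/(α ϕ(ξ)) > 0, and T(x) = (e^{αx} − 1)/α. Then for all ξ, ξ' ∈ Ω: T(L^{(α)}_φ[ξ:ξ']) = κ(ξ) · B_ϕ[ξ:ξ'], where B_ϕ[ξ:ξ'] = ϕ(ξ) − ϕ(ξ') − ∇ϕ(ξ')·(ξ − ξ') is the Bregman divergence of ϕ. -/

import Mathlib

open Real Set
open scoped RealInnerProductSpace

abbrev E (n : ℕ) := EuclideanSpace ℝ (Fin n)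

theorem log_divergence_as_conformal_bregman (n : ℕ) (Ω : Set (E n))
    (hΩopen : IsOpen Ω) (hΩconv : Convex ℝ Ω)
    (α : ℝ) (hα : 0 < α)
    (φ : E n → ℝ) (Dφ : E n → E n)
    (hdiff : ∀ ξ ∈ Ω, HasGradientAt φ (Dφ ξ) ξ)
    (hconc : ConcaveOn ℝ Ω (fun ξ => Real.exp (α * φ ξ)))
    (ϕ : E n → ℝ) (hϕ : ∀ ξ, ϕ ξ = -Real.exp (α * φ ξ))
    (Dϕ : E n → E n)
    (hDϕ : ∀ ξ ∈ Ω, HasGradientAt ϕ (Dϕ ξ) ξ)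
    (κ : E n → ℝ) (hκ : ∀ ξ, κ ξ = -1 / (α * ϕ ξ)) :
    ∀ ξ ∈ Ω, ∀ ξ' ∈ Ω,
      (Real.exp (α * ((1 / α) * Real.log (1 + α * ⟪Dφ ξ', ξ - ξ'⟫) - (φ ξ - φ ξ'))) - 1) / α
        = κ ξ * (ϕ ξ - ϕ ξ' - ⟪Dϕ ξ', ξ - ξ'⟫) := by
  intro ξ hξ ξ' hξ'
  set g : E n → ℝ := fun x => Real.exp (α * φ x) with hg
  set s : ℝ := ⟪Dφ ξ', ξ - ξ'⟫ with hs
  have ha : 0 < g ξ := Real.exp_pos _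
  have hb : 0 < g ξ' := Real.exp_pos _
  -- gradient of g at ξ'
  have hgF : HasFDerivAt g ((α * g ξ') • (InnerProductSpace.toDual ℝ (E n) (Dφ ξ'))) ξ' := by
    have h1 : HasFDerivAt (fun x => α * φ x)
        (α • (InnerProductSpace.toDual ℝ (E n) (Dφ ξ'))) ξ' :=
      ((hdiff ξ' hξ').hasFDerivAt).const_mul α
    have h2 := h1.exp
    rw [smul_smul, mul_comm (Real.exp (α * φ ξ')) α] at h2
    exact h2
  -- gradient of ϕ at ξ'
  have hϕF : HasFDerivAt ϕ ((-(α * g ξ')) • (InnerProductSpace.toDual ℝ (E n) (Dφ ξ'))) ξ' := by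
    have : HasFDerivAt (fun x => -g x)
        (-((α * g ξ') • (InnerProductSpace.toDual ℝ (E n) (Dφ ξ')))) ξ' := hgF.neg
    have heq : (fun x => -g x) = ϕ := by funext x; rw [hϕ x]
    rw [heq] at this
    simpa [neg_smul] using this
  have hDϕeq : ⟪Dϕ ξ', ξ - ξ'⟫ = -(α * g ξ') * s := by
    have h1 := (hDϕ ξ' hξ').hasFDerivAt
    have h2 := hϕF
    have := h1.unique h2
    have := congrArg (fun L => (L : E n →L[ℝ] ℝ) (ξ - ξ')) this
    simpa [InnerProductSpace.toDual_apply_apply, hs] using this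
  -- concavity inequality : g ξ ≤ g ξ' + α * (g ξ') * s
  have hkey : g ξ ≤ g ξ' + (α * g ξ') * s := by
    rcases eq_or_ne ξ ξ' with rfl | hne
    · simp [hs]
    · set v : E n := ξ - ξ' with hv
      set c : ℝ → E n := fun t => ξ' + t • v with hc
      have hcderiv : HasDerivAt c v 0 := by
        have : HasDerivAt (fun t : ℝ => t • v) ((1 : ℝ) • v) 0 := (hasDerivAt_id 0).smul_const v
        simpa [hc] using this.const_add ξ'
      have hhd : HasDerivAt (fun t => g (c t)) ((α * g ξ') * s) 0 := by
        have hgF' : HasFDerivAt g ((α * g ξ') • (InnerProductSpace.toDual ℝ (E n) (Dφ ξ')))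
            (c 0) := by simpa [hc] using hgF
        have := hgF'.comp_hasDerivAt 0 hcderiv
        have h' : HasDerivAt (g ∘ c) ((α * g ξ') * s) 0 := by
          simpa [InnerProductSpace.toDual_apply_apply, hs, hv] using this
        exact h'
      have hS : ConcaveOn ℝ (c ⁻¹' Ω) (fun t => g (c t)) := by
        refine hconc.comp_affineMap
          (AffineMap.mk c (LinearMap.smulRight (LinearMap.id : ℝ →ₗ[ℝ] ℝ) v) ?_)
        intro p t; simp [hc]; module
      have h0 : (0 : ℝ) ∈ c ⁻¹' Ω := by simp [hc, hξ']
      have h1 : (1 : ℝ) ∈ c ⁻¹' Ω := by simp [hc, hv, hξ]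
      have := hS.slope_le_of_hasDerivAt h0 h1 one_pos hhd
      rw [slope_def_field] at this
      simp only [hc, hv, one_smul] at this
      have hc1 : ξ' + (ξ - ξ') = ξ := by abel
      rw [hc1] at this
      have : g ξ - g ξ' ≤ α * g ξ' * s := by
        have h := this
        field_simp at h
        simp only [zero_smul, add_zero, sub_zero, one_mul] at h
        linarith
      linarith
  have hpos : 0 < 1 + α * s := by
    have h1 : g ξ ≤ g ξ' * (1 + α * s) := by nlinarith
    have h2 := ha.trans_le h1
    nlinarith
  -- now compute
  have hαne : α ≠ 0 := ne_of_gt hα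
  have hexp : Real.exp (α * ((1 / α) * Real.log (1 + α * s) - (φ ξ - φ ξ')))
      = (1 + α * s) * g ξ' / g ξ := by
    have harg : α * ((1 / α) * Real.log (1 + α * s) - (φ ξ - φ ξ'))
        = Real.log (1 + α * s) + (α * φ ξ' - α * φ ξ) := by
      field_simp; ring
    rw [harg, Real.exp_add, Real.exp_log hpos, Real.exp_sub, hg]
    ring
  rw [hexp, hDϕeq, hκ, hϕ ξ, hϕ ξ']
  simp only [hg]
  have e1 : Real.exp (α * φ ξ) ≠ 0 := (Real.exp_pos _).ne'
  field_simp
  ring
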